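/- For the deformed Hamiltonian T̃_b = T_b/(1 − λ x), the function K̃_{b2} = p_x^2 + (2k_1 x^2 + k_3 x) p_z^2 + 2λ x T̃_b Poisson-commutes with T̃_b on the open set where 1 − λ x ≠ 0 and y ≠ 0. -/

import Mathlib

set_option maxHeartbeats 2000000

lemma hd_quad (a b c x : ℝ) :
    HasDerivAt (fun t : ℝ => a + b*t + c*t^2) (b + 2*c*x) x := by
  have h := (((hasDerivAt_id x).const_mul b).const_add a).add
    ((hasDerivAt_pow 2 x).const_mul c)
  simpa [Pi.add_def, mul_comm, mul_assoc, mul_left_comm] using h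

lemma deriv_quad_div (e a b c x : ℝ) (h : 1 - e*x ≠ 0) :
    deriv (fun t : ℝ => (a + b*t + c*t^2)/(1 - e*t)) x
      = ((b + 2*c*x)*(1 - e*x) + e*(a + b*x + c*x^2))/(1 - e*x)^2 := by
  have hDen : HasDerivAt (fun t : ℝ => 1 - e*t) (-e) x := by
    simpa using ((hasDerivAt_id x).const_mul e).const_sub 1
  have h' := ((hd_quad a b c x).div hDen h).deriv
  rw [show (fun t : ℝ => (a + b*t + c*t^2)/(1 - e*t)) = (fun t => a + b*t + c*t^2) / (fun t => 1 - e*t) from rfl, h']; ring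

lemma deriv_ABC (A B C y : ℝ) (hy : y ≠ 0) :
    deriv (fun t : ℝ => A + B*t^2 + C/t^2) y = 2*B*y - 2*C/y^3 := by
  have h1 := (((hasDerivAt_pow 2 y).const_mul B).const_add A)
  have h2 : HasDerivAt (fun t : ℝ => C/t^2)
      ((0*y^2 - C*(2*y^1))/(y^2)^2) y :=
    (hasDerivAt_const y C).div (hasDerivAt_pow 2 y) (pow_ne_zero 2 hy)
  have h := (h1.add h2).deriv
  rw [show (fun t : ℝ => A + B*t^2 + C/t^2) = (fun x => A + B*x^2) + (fun t => C/t^2) from rfl, h]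
  field_simp
  ring

lemma deriv_AB (A B p : ℝ) :
    deriv (fun t : ℝ => A + B*t^2) p = 2*B*p := by
  have h := (((hasDerivAt_pow 2 p).const_mul B).const_add A).deriv
  rw [h]; ring

noncomputable def pb (F G : ℝ → ℝ → ℝ → ℝ → ℝ → ℝ → ℝ) (x y z px py pz : ℝ) : ℝ :=
    deriv (fun t => F t y z px py pz) x * deriv (fun t => G x y z t py pz) px
  + deriv (fun t => F x t z px py pz) y * deriv (fun t => G x y z px t pz) py
  + deriv (fun t => F x y t px py pz) z * deriv (fun t => G x y z px py t) pz
  - deriv (fun t => F x y z t py pz) px * deriv (fun t => G t y z px py pz) x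
  - deriv (fun t => F x y z px t pz) py * deriv (fun t => G x t z px py pz) y
  - deriv (fun t => F x y z px py t) pz * deriv (fun t => G x y t px py pz) z

noncomputable def Ttb (lam k1 k2 k3 : ℝ) : ℝ → ℝ → ℝ → ℝ → ℝ → ℝ → ℝ :=
  fun x y _ px py pz =>
    ((1/2) * (px^2 + py^2 + ((1/2)*k1*(4*x^2+y^2) + k2/y^2 + k3*x) * pz^2))
      / (1 - lam*x)

theorem stmt_11 (lam k1 k2 k3 : ℝ) (x y z px py pz : ℝ)
    (hmu : 1 - lam*x ≠ 0) (hy : y ≠ 0) :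
    pb (Ttb lam k1 k2 k3)
       (fun x y z' px py pz =>
          px^2 + (2*k1*x^2 + k3*x) * pz^2
            + 2*lam*x * Ttb lam k1 k2 k3 x y z' px py pz)
       x y z px py pz = 0 := by
  have hex : ∀ᶠ t in nhds x, 1 - lam*t ≠ 0 := by
    have hc : ContinuousAt (fun t : ℝ => 1 - lam*t) x := by fun_prop
    exact hc.eventually_ne hmu
  -- x-derivative of Ttb
  have h1 : deriv (fun t => Ttb lam k1 k2 k3 t y z px py pz) x
      = (((1/2)*(k3*pz^2) + 2*(k1*pz^2)*x)*(1 - lam*x)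
          + lam*((1/2)*(px^2+py^2+((1/2)*k1*y^2+k2/y^2)*pz^2)
              + (1/2)*(k3*pz^2)*x + (k1*pz^2)*x^2))/(1 - lam*x)^2 := by
    have heq : (fun t => Ttb lam k1 k2 k3 t y z px py pz)
        =ᶠ[nhds x] (fun t => ((1/2)*(px^2+py^2+((1/2)*k1*y^2+k2/y^2)*pz^2)
            + (1/2)*(k3*pz^2)*t + (k1*pz^2)*t^2)/(1 - lam*t)) := by
      filter_upwards [hex] with t ht
      simp only [Ttb]
      field_simp
      ring
    rw [heq.deriv_eq, deriv_quad_div lam _ _ _ x hmu]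
  -- x-derivative of K
  have h2 : deriv (fun t => px^2 + (2*k1*t^2 + k3*t)*pz^2
        + 2*lam*t * Ttb lam k1 k2 k3 t y z px py pz) x
      = (((k3*pz^2 + lam*py^2 + lam*pz^2*((1/2)*k1*y^2+k2/y^2))
            + 2*(2*k1*pz^2)*x)*(1 - lam*x)
          + lam*(px^2 + (k3*pz^2 + lam*py^2 + lam*pz^2*((1/2)*k1*y^2+k2/y^2))*x
              + (2*k1*pz^2)*x^2))/(1 - lam*x)^2 := by
    have heq : (fun t => px^2 + (2*k1*t^2 + k3*t)*pz^2
          + 2*lam*t * Ttb lam k1 k2 k3 t y z px py pz)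
        =ᶠ[nhds x] (fun t => (px^2
            + (k3*pz^2 + lam*py^2 + lam*pz^2*((1/2)*k1*y^2+k2/y^2))*t
            + (2*k1*pz^2)*t^2)/(1 - lam*t)) := by
      filter_upwards [hex] with t ht
      simp only [Ttb]
      have ht' : 1 - t*lam ≠ 0 := by rwa [mul_comm]
      field_simp
      ring
    rw [heq.deriv_eq, deriv_quad_div lam _ _ _ x hmu]
  -- y-derivative of Ttb
  have h3 : deriv (fun t => Ttb lam k1 k2 k3 x t z px py pz) y
      = 2*(k1*pz^2/(4*(1-lam*x)))*y - 2*(k2*pz^2/(2*(1-lam*x)))/y^3 := by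
    have heq : (fun t => Ttb lam k1 k2 k3 x t z px py pz)
        =ᶠ[nhds y] (fun t => (1/2)*(px^2+py^2+(2*k1*x^2+k3*x)*pz^2)/(1-lam*x)
            + (k1*pz^2/(4*(1-lam*x)))*t^2 + (k2*pz^2/(2*(1-lam*x)))/t^2) := by
      filter_upwards [continuous_id.continuousAt.eventually_ne hy] with t ht
      replace ht : t ≠ 0 := ht
      simp only [Ttb]
      field_simp
      ring
    rw [heq.deriv_eq, deriv_ABC _ _ _ y hy]
  -- y-derivative of K
  have h4 : deriv (fun t => px^2 + (2*k1*x^2 + k3*x)*pz^2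
        + 2*lam*x * Ttb lam k1 k2 k3 x t z px py pz) y
      = 2*(lam*x*k1*pz^2/(2*(1-lam*x)))*y - 2*(lam*x*k2*pz^2/(1-lam*x))/y^3 := by
    have heq : (fun t => px^2 + (2*k1*x^2 + k3*x)*pz^2
          + 2*lam*x * Ttb lam k1 k2 k3 x t z px py pz)
        =ᶠ[nhds y] (fun t => (px^2 + (2*k1*x^2+k3*x)*pz^2
            + lam*x*(px^2+py^2+(2*k1*x^2+k3*x)*pz^2)/(1-lam*x))
            + (lam*x*k1*pz^2/(2*(1-lam*x)))*t^2
            + (lam*x*k2*pz^2/(1-lam*x))/t^2) := by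
      filter_upwards [continuous_id.continuousAt.eventually_ne hy] with t ht
      replace ht : t ≠ 0 := ht
      simp only [Ttb]
      field_simp
      ring
    rw [heq.deriv_eq, deriv_ABC _ _ _ y hy]
  -- z-derivatives
  have h5 : deriv (fun t => Ttb lam k1 k2 k3 x y t px py pz) z = 0 := by
    simp only [Ttb]; exact deriv_const z _
  have h6 : deriv (fun t => px^2 + (2*k1*x^2 + k3*x)*pz^2
        + 2*lam*x * Ttb lam k1 k2 k3 x y t px py pz) z = 0 := by
    simp only [Ttb]; exact deriv_const z _
  -- px-derivatives
  have h7 : deriv (fun t => Ttb lam k1 k2 k3 x y z t py pz) px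
      = 2*(1/(2*(1-lam*x)))*px := by
    have heq : (fun t => Ttb lam k1 k2 k3 x y z t py pz)
        = (fun t => (1/2)*(py^2+((1/2)*k1*(4*x^2+y^2)+k2/y^2+k3*x)*pz^2)/(1-lam*x)
            + (1/(2*(1-lam*x)))*t^2) := by
      funext t; simp only [Ttb]; field_simp; ring
    rw [heq, deriv_AB]
  have h8 : deriv (fun t => t^2 + (2*k1*x^2 + k3*x)*pz^2
        + 2*lam*x * Ttb lam k1 k2 k3 x y z t py pz) px
      = 2*(1 + lam*x/(1-lam*x))*px := by
    have heq : (fun t => t^2 + (2*k1*x^2 + k3*x)*pz^2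
          + 2*lam*x * Ttb lam k1 k2 k3 x y z t py pz)
        = (fun t => ((2*k1*x^2+k3*x)*pz^2
            + lam*x*(py^2+((1/2)*k1*(4*x^2+y^2)+k2/y^2+k3*x)*pz^2)/(1-lam*x))
            + (1 + lam*x/(1-lam*x))*t^2) := by
      funext t; simp only [Ttb]; field_simp; ring
    rw [heq, deriv_AB]
  -- py-derivatives
  have h9 : deriv (fun t => Ttb lam k1 k2 k3 x y z px t pz) py
      = 2*(1/(2*(1-lam*x)))*py := by
    have heq : (fun t => Ttb lam k1 k2 k3 x y z px t pz)
        = (fun t => (1/2)*(px^2+((1/2)*k1*(4*x^2+y^2)+k2/y^2+k3*x)*pz^2)/(1-lam*x)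
            + (1/(2*(1-lam*x)))*t^2) := by
      funext t; simp only [Ttb]; field_simp; ring
    rw [heq, deriv_AB]
  have h10 : deriv (fun t => px^2 + (2*k1*x^2 + k3*x)*pz^2
        + 2*lam*x * Ttb lam k1 k2 k3 x y z px t pz) py
      = 2*(lam*x/(1-lam*x))*py := by
    have heq : (fun t => px^2 + (2*k1*x^2 + k3*x)*pz^2
          + 2*lam*x * Ttb lam k1 k2 k3 x y z px t pz)
        = (fun t => (px^2 + (2*k1*x^2+k3*x)*pz^2
            + lam*x*(px^2+((1/2)*k1*(4*x^2+y^2)+k2/y^2+k3*x)*pz^2)/(1-lam*x))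
            + (lam*x/(1-lam*x))*t^2) := by
      funext t; simp only [Ttb]; field_simp; ring
    rw [heq, deriv_AB]
  -- pz-derivatives
  have h11 : deriv (fun t => Ttb lam k1 k2 k3 x y z px py t) pz
      = 2*(((1/2)*k1*(4*x^2+y^2)+k2/y^2+k3*x)/(2*(1-lam*x)))*pz := by
    have heq : (fun t => Ttb lam k1 k2 k3 x y z px py t)
        = (fun t => (1/2)*(px^2+py^2)/(1-lam*x)
            + (((1/2)*k1*(4*x^2+y^2)+k2/y^2+k3*x)/(2*(1-lam*x)))*t^2) := by
      funext t; simp only [Ttb]; field_simp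
    rw [heq, deriv_AB]
  have h12 : deriv (fun t => px^2 + (2*k1*x^2 + k3*x)*t^2
        + 2*lam*x * Ttb lam k1 k2 k3 x y z px py t) pz
      = 2*((2*k1*x^2+k3*x)
          + lam*x*((1/2)*k1*(4*x^2+y^2)+k2/y^2+k3*x)/(1-lam*x))*pz := by
    have heq : (fun t => px^2 + (2*k1*x^2 + k3*x)*t^2
          + 2*lam*x * Ttb lam k1 k2 k3 x y z px py t)
        = (fun t => (px^2 + lam*x*(px^2+py^2)/(1-lam*x))
            + ((2*k1*x^2+k3*x)
              + lam*x*((1/2)*k1*(4*x^2+y^2)+k2/y^2+k3*x)/(1-lam*x))*t^2) := by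
      funext t; simp only [Ttb]; field_simp; ring
    rw [heq, deriv_AB]
  simp only [pb]
  rw [h1, h2, h3, h4, h5, h6, h7, h8, h9, h10, h11, h12]
  have hmu' : 1 - x*lam ≠ 0 := by rwa [mul_comm]
  field_simp
  ring
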